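/- Let $\psi_G$ be the shortest trek map of a DAG $G$ and suppose $\sigma^u - \sigma^v \in \ker \psi_G$ where every indeterminate appearing in $\sigma^u$ or $\sigma^v$ corresponds to a pair of vertices connected by a trek. Then for every vertex $i$, the number of occurrences of index $i$ among the indeterminates of $\sigma^u$ (counting $\sigma_{ii}$ twice) equals the corresponding count for $\sigma^v$. -/

import Mathlib

open MvPolynomial

/-- A (simple) trek in a directed graph with adjacency `Adj`: a pair of directed
paths from a common source (top) vertex down to `i` and down to `j`, with no
repeated vertices overall (i.e. a simple colliderless path between `i` and `j`). -/
structure Trek {V : Type*} (Adj : V → V → Prop) (i j : V) where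
  left : List V
  right : List V
  left_ne : left ≠ []
  right_ne : right ≠ []
  same_top : left.head? = right.head?
  chain_left : left.Chain' Adj
  chain_right : right.Chain' Adj
  last_left : left.getLast? = some i
  last_right : right.getLast? = some j
  nodup : (left ++ right.tail).Nodup

namespace Trek

variable {V : Type*} {Adj : V → V → Prop} {i j : V}

/-- The topmost (source) vertex of a trek. -/
def top (t : Trek Adj i j) : V := t.left.head t.left_ne

/-- The list of directed edges used by a trek. -/
def edges (t : Trek Adj i j) : List (V × V) :=
  t.left.zip t.left.tail ++ t.right.zip t.right.tail

end Trek

/-- A trek is shortest if no trek between the same endpoints has fewer edges. -/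
def IsShortestTrek {V : Type*} {Adj : V → V → Prop} {i j : V} (t : Trek Adj i j) : Prop :=
  ∀ t' : Trek Adj i j, t.edges.length ≤ t'.edges.length

/-- Between any two vertices there is a unique shortest trek (whenever some trek
exists); this is the condition for the shortest trek map to be well defined. -/
def ShortestTreksUnique {V : Type*} (Adj : V → V → Prop) : Prop :=
  ∀ (i j : V) (t t' : Trek Adj i j), IsShortestTrek t → IsShortestTrek t' →
    t'.left = t.left ∧ t'.right = t.right

/-- A DAG on vertex set `Fin n`, with all edges pointing from a smaller vertex to a
larger one (vertices are numerically ordered, which guarantees acyclicity). -/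
structure DAG (n : ℕ) where
  E : Finset (Fin n × Fin n)
  increasing : ∀ e ∈ E, e.1 < e.2

def DAG.Adj {n : ℕ} (G : DAG n) (i j : Fin n) : Prop := (i, j) ∈ G.E

/-- Index type for the indeterminates `σ_{ij}`, `1 ≤ i ≤ j ≤ n`. -/
abbrev SymIdx (n : ℕ) := {p : Fin n × Fin n // p.1 ≤ p.2}

/-- The monomial `a_{top t} * ∏_{(k,l) ∈ t} λ_{kl}` associated to a trek `t`, in the
polynomial ring `ℂ[a_i, λ_{kl}]` (where `a_i = X (Sum.inl i)`, `λ_{kl} = X (Sum.inr (k,l))`). -/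
noncomputable def trekMonomial {n : ℕ} {Adj : Fin n → Fin n → Prop} {i j : Fin n}
    (t : Trek Adj i j) : MvPolynomial (Fin n ⊕ Fin n × Fin n) ℂ :=
  X (Sum.inl t.top) *
    (t.edges.map fun e => (X (Sum.inr e) : MvPolynomial (Fin n ⊕ Fin n × Fin n) ℂ)).prod

/-- `ψ` is the shortest trek map of `G`: it sends `σ_{ij}` to `0` when there is no trek
between `i` and `j`, and to the monomial of the (unique) shortest trek otherwise
(for `i = j` the unique trek is trivial and the monomial is `a_i`). -/
def IsShortestTrekMap {n : ℕ} (G : DAG n)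
    (ψ : MvPolynomial (SymIdx n) ℂ →ₐ[ℂ] MvPolynomial (Fin n ⊕ Fin n × Fin n) ℂ) : Prop :=
  ∀ p : SymIdx n,
    (IsEmpty (Trek G.Adj p.1.1 p.1.2) → ψ (X p) = 0) ∧
    (∀ t : Trek G.Adj p.1.1 p.1.2, IsShortestTrek t → ψ (X p) = trekMonomial t)

/-- The number of occurrences of the index `i` among the indeterminates of the
monomial `σ^u` (counting `σ_{ii}` twice). -/
def idxCount {n : ℕ} (i : Fin n) (u : SymIdx n →₀ ℕ) : ℕ :=
  u.sum fun p m => m * ((if p.1.1 = i then 1 else 0) + (if p.1.2 = i then 1 else 0))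

section AuxStmt7

open LaurentPolynomial

lemma aux_T_injective (a b : ℤ) (h : (T a : LaurentPolynomial ℂ) = T b) : a = b := by
  have := AddMonoidAlgebra.single_left_injective (M := ℤ) (R := ℂ) one_ne_zero h
  exact this

lemma aux_exists_shortest {V : Type*} {Adj : V → V → Prop} {i j : V}
    (h : Nonempty (Trek Adj i j)) : ∃ t : Trek Adj i j, IsShortestTrek t := by
  obtain ⟨t0⟩ := h
  have hne : Set.Nonempty {m | ∃ t : Trek Adj i j, t.edges.length = m} := ⟨_, t0, rfl⟩
  obtain ⟨t, ht⟩ := Nat.sInf_mem hne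
  exact ⟨t, fun t' => ht ▸ Nat.sInf_le ⟨t', rfl⟩⟩

lemma aux_prodT {α : Type*} (l : List α) (g : α → ℤ) :
    (l.map fun e => (T (g e) : LaurentPolynomial ℂ)).prod = T ((l.map g).sum) := by
  induction l with
  | nil => simp
  | cons a l ih =>
    rw [List.map_cons, List.map_cons, List.prod_cons, List.sum_cons, ih, ← T_add]

lemma aux_telescope {V : Type*} (f : V → ℤ) :
    ∀ (l : List V) (a : V),
      (((a :: l).zip l).map fun e => f e.2 - f e.1).sum
        = f ((a :: l).getLast (by simp)) - f a := by
  intro l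
  induction l with
  | nil => intro a; simp
  | cons b l ih =>
    intro a
    have hg : (a :: b :: l).getLast (by simp) = (b :: l).getLast (by simp) :=
      List.getLast_cons (by simp)
    rw [List.zip_cons_cons, List.map_cons, List.sum_cons, ih b, hg]
    ring

/-- The weight homomorphism used to compare multidegrees. -/
noncomputable def wtHom {n : ℕ} (i₀ : Fin n) :
    MvPolynomial (Fin n ⊕ Fin n × Fin n) ℂ →ₐ[ℂ] LaurentPolynomial ℂ :=
  aeval (fun s => match s with
    | Sum.inl c => T (2 * (if c = i₀ then 1 else 0))
    | Sum.inr (k, l) => T ((if l = i₀ then 1 else 0) - (if k = i₀ then 1 else 0)))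

lemma aux_wt_trekMonomial {n : ℕ} (i₀ : Fin n) {Adj : Fin n → Fin n → Prop}
    {i j : Fin n} (t : Trek Adj i j) :
    wtHom i₀ (trekMonomial t) =
      T ((if i = i₀ then 1 else 0) + (if j = i₀ then 1 else 0)) := by
  let f : Fin n → ℤ := fun x => if x = i₀ then 1 else 0
  have hXinl : ∀ c : Fin n, wtHom i₀ (X (Sum.inl c)) = T (2 * f c) := by
    intro c; unfold wtHom; rw [aeval_X]
  have hXinr : ∀ e : Fin n × Fin n,
      wtHom i₀ (X (Sum.inr e)) = T (f e.2 - f e.1) := by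
    rintro ⟨k, l⟩; unfold wtHom; rw [aeval_X]
  have hedges : wtHom i₀ ((t.edges.map fun e =>
      (X (Sum.inr e) : MvPolynomial (Fin n ⊕ Fin n × Fin n) ℂ)).prod)
      = T ((t.edges.map fun e => f e.2 - f e.1).sum) := by
    rw [map_list_prod, List.map_map]
    have : ((wtHom i₀) ∘ fun e =>
        (X (Sum.inr e) : MvPolynomial (Fin n ⊕ Fin n × Fin n) ℂ))
        = fun e => (T (f e.2 - f e.1) : LaurentPolynomial ℂ) := by
      funext e; exact hXinr e
    rw [this, aux_prodT]
  have hL : t.left = t.top :: t.left.tail := (List.cons_head_tail t.left_ne).symm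
  have hRhead : t.right.head t.right_ne = t.top := by
    have h1 : t.left.head? = some t.top := by rw [hL]; rfl
    have h2 : t.right.head? = some (t.right.head t.right_ne) :=
      List.head?_eq_head _
    rw [← t.same_top, h1] at h2
    exact (Option.some_injective _ h2).symm
  have hR : t.right = t.top :: t.right.tail := by
    conv_lhs => rw [← List.cons_head_tail t.right_ne]
    rw [hRhead]
  have hglL : (t.top :: t.left.tail).getLast (by simp) = i := by
    have h1 : (t.top :: t.left.tail).getLast? =
        some ((t.top :: t.left.tail).getLast (by simp)) :=
      List.getLast?_eq_getLast _
    conv_lhs at h1 => rw [← hL]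
    rw [t.last_left] at h1
    exact (Option.some_injective _ h1).symm
  have hglR : (t.top :: t.right.tail).getLast (by simp) = j := by
    have h1 : (t.top :: t.right.tail).getLast? =
        some ((t.top :: t.right.tail).getLast (by simp)) :=
      List.getLast?_eq_getLast _
    conv_lhs at h1 => rw [← hR]
    rw [t.last_right] at h1
    exact (Option.some_injective _ h1).symm
  have hsumL : ((t.left.zip t.left.tail).map fun e => f e.2 - f e.1).sum
      = f i - f t.top := by
    conv_lhs => rw [hL, List.tail_cons]
    rw [aux_telescope f t.left.tail t.top, hglL]
  have hsumR : ((t.right.zip t.right.tail).map fun e => f e.2 - f e.1).sum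
      = f j - f t.top := by
    conv_lhs => rw [hR, List.tail_cons]
    rw [aux_telescope f t.right.tail t.top, hglR]
  rw [trekMonomial, map_mul, hXinl, hedges, Trek.edges, List.map_append,
    List.sum_append, hsumL, hsumR, ← T_add]
  congr 1
  show 2 * f t.top + (f i - f t.top + (f j - f t.top)) = f i + f j
  ring

lemma aux_T_finsuppProd {n : ℕ} (w : SymIdx n →₀ ℕ) (g : SymIdx n → ℤ) :
    (w.prod fun p m => (T (g p) : LaurentPolynomial ℂ) ^ m)
      = T (w.sum fun p m => (m : ℤ) * g p) := by
  classical
  rw [Finsupp.prod, Finsupp.sum]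
  induction w.support using Finset.induction with
  | empty => simp
  | @insert a s ha ih =>
    rw [Finset.prod_insert ha, Finset.sum_insert ha, ih, T_pow, ← T_add]

theorem stmt7 (n : ℕ) (G : DAG n) (hst : ShortestTreksUnique G.Adj)
    (ψ : MvPolynomial (SymIdx n) ℂ →ₐ[ℂ] MvPolynomial (Fin n ⊕ Fin n × Fin n) ℂ)
    (hψ : IsShortestTrekMap G ψ)
    (u v : SymIdx n →₀ ℕ)
    (hker : monomial u (1 : ℂ) - monomial v 1 ∈ RingHom.ker ψ.toRingHom)
    (hu : ∀ p ∈ u.support, Nonempty (Trek G.Adj p.1.1 p.1.2))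
    (hv : ∀ p ∈ v.support, Nonempty (Trek G.Adj p.1.1 p.1.2)) :
    ∀ i : Fin n, idxCount i u = idxCount i v := by
  classical
  intro i
  have hψeq : ψ (monomial u 1) = ψ (monomial v 1) := by
    rw [RingHom.mem_ker] at hker
    have h0 : ψ.toRingHom (monomial u 1 - monomial v 1) = 0 := hker
    rw [map_sub, sub_eq_zero] at h0
    simpa using h0
  have key : ∀ w : SymIdx n →₀ ℕ,
      (∀ p ∈ w.support, Nonempty (Trek G.Adj p.1.1 p.1.2)) →
      wtHom i (ψ (monomial w 1)) = LaurentPolynomial.T ((idxCount i w : ℤ)) := by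
    intro w hw
    have hmono : (monomial w (1 : ℂ)) = w.prod fun p m => (X p) ^ m := by
      rw [monomial_eq, C_1, one_mul]
    rw [hmono, map_finsuppProd, map_finsuppProd]
    have hterm : ∀ p ∈ w.support,
        wtHom i (ψ (X p ^ w p)) =
          (fun (p : SymIdx n) (m : ℕ) =>
            (LaurentPolynomial.T ((if p.1.1 = i then 1 else 0) +
              (if p.1.2 = i then 1 else 0)) : LaurentPolynomial ℂ) ^ m) p (w p) := by
      intro p hp
      obtain ⟨t, ht⟩ := aux_exists_shortest (hw p hp)
      rw [map_pow, map_pow, (hψ p).2 t ht, aux_wt_trekMonomial i t]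
    rw [Finsupp.prod_congr hterm, aux_T_finsuppProd]
    congr 1
    rw [idxCount, Finsupp.sum, Finsupp.sum, Nat.cast_sum]
    refine Finset.sum_congr rfl fun p _ => ?_
    push_cast
    ring
  have hkey := key u hu
  rw [hψeq, key v hv] at hkey
  exact_mod_cast aux_T_injective _ _ hkey.symm
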